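/- Let n, m be positive natural numbers, K an invertible n × n real matrix, A an n × m real matrix, and c a nonzero real number such that Aᵀ·K·A + c·Iₘ is invertible. Then the n × n matrix K·A·Aᵀ·K + c·K is invertible and (K·A·Aᵀ·K + c·K)⁻¹·K·A = A·(Aᵀ·K·A + c·Iₘ)⁻¹. Consequently, for every vector k ∈ ℝⁿ (the test kernel vector) and every y ∈ ℝᵐ, the Kernel IV estimate kᵀ·(K·A·Aᵀ·K + c·K)⁻¹·K·A·y equals the GPIV posterior-mean estimate kᵀ·A·(Aᵀ·K·A + c·Iₘ)⁻¹·y. -/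

import Mathlib

open Matrix
/-- Equivalence of the KIV, DIV, and GPIV estimators. Let `K` be an invertible `n × n`
real matrix, `A` an `n × m` real matrix, `c ≠ 0` such that `Aᵀ·K·A + c·Iₘ` is invertible.
Then `K·A·Aᵀ·K + c·K` is invertible, `(K·A·Aᵀ·K + c·K)⁻¹·K·A = A·(Aᵀ·K·A + c·Iₘ)⁻¹`, and
for every test kernel vector `k` and outcome vector `y`, the KIV estimate
`kᵀ·(K·A·Aᵀ·K + c·K)⁻¹·K·A·y` equals the GPIV posterior-mean estimate
`kᵀ·A·(Aᵀ·K·A + c·Iₘ)⁻¹·y`. -/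
theorem kiv_div_gpiv_equiv (n m : ℕ) (hn : 0 < n) (hm : 0 < m)
    (K : Matrix (Fin n) (Fin n) ℝ) (hK : IsUnit K)
    (A : Matrix (Fin n) (Fin m) ℝ) (c : ℝ) (hc : c ≠ 0)
    (h : IsUnit (Aᵀ * K * A + c • (1 : Matrix (Fin m) (Fin m) ℝ))) :
    IsUnit (K * A * Aᵀ * K + c • K) ∧
    (K * A * Aᵀ * K + c • K)⁻¹ * (K * A) =
      A * (Aᵀ * K * A + c • (1 : Matrix (Fin m) (Fin m) ℝ))⁻¹ ∧
    ∀ (k : Fin n → ℝ) (y : Fin m → ℝ),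
      k ⬝ᵥ (((K * A * Aᵀ * K + c • K)⁻¹ * K * A).mulVec y) =
      k ⬝ᵥ ((A * (Aᵀ * K * A + c • (1 : Matrix (Fin m) (Fin m) ℝ))⁻¹).mulVec y) := by
  set B := Aᵀ * K * A + c • (1 : Matrix (Fin m) (Fin m) ℝ) with hB
  set M := A * Aᵀ * K + c • (1 : Matrix (Fin n) (Fin n) ℝ) with hM
  have hBinv : B * B⁻¹ = 1 := Matrix.mul_nonsing_inv B ((Matrix.isUnit_iff_isUnit_det B).mp h)
  have hMA0 : M * A = A * B := by
    simp [hM, hB, Matrix.add_mul, Matrix.mul_add, Matrix.mul_assoc, Matrix.smul_mul,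
      Matrix.mul_smul, Matrix.one_mul, Matrix.mul_one]
  have e1 : M * (A * B⁻¹ * (Aᵀ * K)) = A * Aᵀ * K := by
    rw [← Matrix.mul_assoc, ← Matrix.mul_assoc, ← Matrix.mul_assoc, hMA0,
      Matrix.mul_assoc A B B⁻¹, hBinv, Matrix.mul_one]
  have key : M * (c⁻¹ • ((1 : Matrix (Fin n) (Fin n) ℝ) - A * B⁻¹ * (Aᵀ * K))) = 1 := by
    rw [Matrix.mul_smul, Matrix.mul_sub, Matrix.mul_one, e1, hM, add_sub_cancel_left,
      smul_smul, inv_mul_cancel₀ hc, one_smul]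
  have hMunit : IsUnit M := by
    rw [Matrix.isUnit_iff_isUnit_det]
    have := congrArg Matrix.det key
    rw [Matrix.det_mul, Matrix.det_one] at this
    exact IsUnit.of_mul_eq_one _ this
  have hMinv' : M⁻¹ * M = 1 := Matrix.nonsing_inv_mul M ((Matrix.isUnit_iff_isUnit_det M).mp hMunit)
  have factor : K * A * Aᵀ * K + c • K = K * M := by
    rw [hM, Matrix.mul_add, Matrix.mul_smul, Matrix.mul_one, ← Matrix.mul_assoc,
      ← Matrix.mul_assoc]
  have hUnit : IsUnit (K * A * Aᵀ * K + c • K) := by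
    rw [factor]; exact hK.mul hMunit
  have hMA : M * (A * B⁻¹) = A := by
    rw [← Matrix.mul_assoc, hMA0, Matrix.mul_assoc, hBinv, Matrix.mul_one]
  have hMinvA : M⁻¹ * A = A * B⁻¹ := by
    calc M⁻¹ * A = M⁻¹ * (M * (A * B⁻¹)) := by rw [hMA]
    _ = (M⁻¹ * M) * (A * B⁻¹) := by rw [Matrix.mul_assoc]
    _ = A * B⁻¹ := by rw [hMinv', Matrix.one_mul]
  have main : (K * A * Aᵀ * K + c • K)⁻¹ * (K * A) = A * B⁻¹ := by
    rw [factor, Matrix.mul_inv_rev, Matrix.mul_assoc, ← Matrix.mul_assoc K⁻¹ K A,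
      Matrix.nonsing_inv_mul K ((Matrix.isUnit_iff_isUnit_det K).mp hK), Matrix.one_mul, hMinvA]
  refine ⟨hUnit, main, fun k y => ?_⟩
  rw [Matrix.mul_assoc, main]
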